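/- Let L: R^d → R be convex and differentiable, λ > 0, and let β̂ minimize L(β) + λ‖β‖_1. Let β* ∈ R^d have support S (i.e., β*_j = 0 for j ∉ S). If ‖∇L(β*)‖_∞ < λ/2, then ‖β̂_{S^c} − β*_{S^c}‖_1 ≤ 3‖β̂_S − β*_S‖_1. -/
import Mathlib

/-- Gradient inequality for a convex differentiable function. -/
lemma convex_grad_ineq {n : ℕ} (L : (Fin n → ℝ) → ℝ)
    (hconv : ConvexOn ℝ Set.univ L) (hdiff : Differentiable ℝ L)
    (x y : Fin n → ℝ) :
    fderiv ℝ L x (y - x) ≤ L y - L x := by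
  rcases eq_or_ne y x with rfl | hne
  · simp
  · set A : ℝ →ᵃ[ℝ] (Fin n → ℝ) := AffineMap.lineMap x y with hA
    have hconv' : ConvexOn ℝ Set.univ (L ∘ A) := by
      have := hconv.comp_affineMap A
      simpa using this
    have hA0 : A 0 = x := by simp [hA]
    have hA1 : A 1 = y := by simp [hA]
    have hAder : HasDerivAt (fun t : ℝ => A t) (y - x) 0 := by
      simp only [hA, AffineMap.lineMap_apply, vsub_eq_sub, vadd_eq_add]
      have : HasDerivAt (fun t : ℝ => t • (y - x) + x) ((1:ℝ) • (y - x)) 0 :=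
        ((hasDerivAt_id (0:ℝ)).smul_const (y - x)).add_const x
      simpa using this
    have hder : HasDerivAt (L ∘ A) (fderiv ℝ L x (y - x)) 0 := by
      have hF : HasFDerivAt L (fderiv ℝ L x) (A 0) := by
        rw [hA0]; exact (hdiff x).hasFDerivAt
      exact hF.comp_hasDerivAt 0 hAder
    have := hconv'.le_slope_of_hasDerivAt (Set.mem_univ (0:ℝ)) (Set.mem_univ (1:ℝ))
      one_pos hder
    rw [slope_def_field] at this
    simpa [hA0, hA1] using this

/-- Cone condition for the Lasso: if `β̂` minimizes `L(β) + lam ‖β‖₁` for a convex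
differentiable `L`, `β*` is supported on `S`, and `‖∇L(β*)‖_∞ < lam/2`, then
`‖β̂_{Sᶜ} − β*_{Sᶜ}‖₁ ≤ 3 ‖β̂_S − β*_S‖₁`. -/
theorem stmt_10 (d : ℕ) (L : (Fin d → ℝ) → ℝ) (lam : ℝ) (hlam : 0 < lam)
    (hconv : ConvexOn ℝ Set.univ L) (hdiff : Differentiable ℝ L)
    (βhat βstar : Fin d → ℝ) (S : Finset (Fin d))
    (hsupp : ∀ j ∉ S, βstar j = 0)
    (hmin : ∀ β : Fin d → ℝ,
      L βhat + lam * ∑ i, |βhat i| ≤ L β + lam * ∑ i, |β i|)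
    (hgrad : ∀ i, |fderiv ℝ L βstar (Pi.single i 1)| < lam / 2) :
    ∑ j ∈ Sᶜ, |βhat j - βstar j| ≤ 3 * ∑ j ∈ S, |βhat j - βstar j| := by
  set Δ : Fin d → ℝ := βhat - βstar with hΔ
  set f := fderiv ℝ L βstar with hf
  -- linearity expansion of the gradient pairing
  have hfΔ : f Δ = ∑ i, Δ i * f (Pi.single i 1) := by
    have hrep : Δ = ∑ i, Δ i • (Pi.single i (1:ℝ) : Fin d → ℝ) := by
      funext j
      rw [Finset.sum_apply]
      simp [Pi.single_apply, mul_comm]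
    calc f Δ = f (∑ i, Δ i • (Pi.single i (1:ℝ) : Fin d → ℝ)) := by rw [← hrep]
      _ = ∑ i, Δ i * f (Pi.single i 1) := by
          rw [map_sum]; simp [f.map_smul, smul_eq_mul]
  have habs : |f Δ| ≤ (lam / 2) * ∑ i, |Δ i| := by
    rw [hfΔ]
    calc |∑ i, Δ i * f (Pi.single i 1)| ≤ ∑ i, |Δ i * f (Pi.single i 1)| :=
          Finset.abs_sum_le_sum_abs _ _
      _ ≤ ∑ i, |Δ i| * (lam / 2) := by
          apply Finset.sum_le_sum
          intro i _
          rw [abs_mul]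
          exact mul_le_mul_of_nonneg_left (hgrad i).le (abs_nonneg _)
      _ = (lam / 2) * ∑ i, |Δ i| := by rw [← Finset.sum_mul, mul_comm]
  -- gradient inequality
  have hgi : f (βhat - βstar) ≤ L βhat - L βstar :=
    convex_grad_ineq L hconv hdiff βstar βhat
  have hmin' := hmin βstar
  -- key inequality: lam * ‖β̂‖₁ ≤ lam * ‖β*‖₁ + (lam/2) * ‖Δ‖₁
  have hkey : lam * ∑ i, |βhat i| ≤ lam * ∑ i, |βstar i| + (lam / 2) * ∑ i, |Δ i| := by
    have h1 : L βstar - L βhat ≤ |f Δ| := by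
      have : -(f Δ) ≤ |f Δ| := neg_le_abs _
      have h2 : L βstar - L βhat ≤ -(f Δ) := by
        have := hgi
        simp only [← hΔ] at this
        linarith
      linarith
    linarith [habs]
  -- splitting sums
  have hsplit : ∀ g : Fin d → ℝ, ∑ i, g i = ∑ i ∈ S, g i + ∑ i ∈ Sᶜ, g i := by
    intro g; rw [Finset.sum_add_sum_compl]
  set a := ∑ j ∈ S, |Δ j| with ha
  set b := ∑ j ∈ Sᶜ, |Δ j| with hb
  have hΔj : ∀ j, Δ j = βhat j - βstar j := fun j => rfl
  -- ‖β̂‖₁ = ∑_S |β̂| + b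
  have h1 : ∑ i, |βhat i| = ∑ j ∈ S, |βhat j| + b := by
    rw [hsplit (fun i => |βhat i|), hb]
    congr 1
    apply Finset.sum_congr rfl
    intro j hj
    rw [Finset.mem_compl] at hj
    rw [hΔj j, hsupp j hj, sub_zero]
  -- ‖β*‖₁ ≤ ∑_S |β̂| + a
  have h2 : ∑ i, |βstar i| ≤ ∑ j ∈ S, |βhat j| + a := by
    rw [hsplit (fun i => |βstar i|), ha]
    have h3 : ∑ j ∈ Sᶜ, |βstar j| = 0 := by
      apply Finset.sum_eq_zero
      intro j hj
      rw [Finset.mem_compl] at hj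
      rw [hsupp j hj, abs_zero]
    rw [h3, add_zero, ← Finset.sum_add_distrib]
    apply Finset.sum_le_sum
    intro j _
    rw [hΔj j]
    calc |βstar j| = |βhat j - (βhat j - βstar j)| := by ring_nf
      _ ≤ |βhat j| + |βhat j - βstar j| := abs_sub _ _
  have hΔsum : ∑ i, |Δ i| = a + b := by rw [hsplit (fun i => |Δ i|)]
  rw [hΔsum, h1] at hkey
  have ha' : (0:ℝ) ≤ a := Finset.sum_nonneg fun _ _ => abs_nonneg _
  have hb' : (0:ℝ) ≤ b := Finset.sum_nonneg fun _ _ => abs_nonneg _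
  have hfinal : b ≤ 3 * a := by nlinarith [hkey, hmin', h2, hlam]
  have hab : b = ∑ j ∈ Sᶜ, |βhat j - βstar j| := by
    rw [hb]; apply Finset.sum_congr rfl; intro j _; rw [hΔj j]
  have haS : a = ∑ j ∈ S, |βhat j - βstar j| := by
    rw [ha]; apply Finset.sum_congr rfl; intro j _; rw [hΔj j]
  rw [← hab, ← haS]; exact hfinal
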